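/- One has 0 < t₀ < t₁ < 1, where t₀ = h₂⁻¹(0) and t₁ = h₁⁻¹(1); moreover p⁺ < h₂⁻¹(p⁺) < h₁⁻¹(q⁺) < q⁺; and every t ∈ [0,1] with both h₁(t) ∈ (0,1) and h₂(t) ∈ (0,1) satisfies t₀ < t < t₁. -/

import Mathlib

lemma expand_lem (lam : ℝ) (h : ℝ → ℝ) (hd : Differentiable ℝ h)
    (hge : ∀ t, lam ≤ deriv h t) {s t : ℝ} (hst : s ≤ t) :
    lam * (t - s) ≤ h t - h s := by
  have hmono : Monotone (fun x => h x - lam * x) := by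
    apply monotone_of_deriv_nonneg
    · exact hd.sub (differentiable_id.const_mul lam)
    · intro x
      have : deriv (fun x => h x - lam * x) x = deriv h x - lam := by
        have h1 : DifferentiableAt ℝ (fun x : ℝ => lam * x) x := by fun_prop
        rw [deriv_fun_sub (hd x) h1, deriv_const_mul_field]
        simp
      rw [this]
      linarith [hge x]
  have := hmono hst
  simp only at this
  linarith

/-- **Superposition region (Remark 5.2 and Eq. (5.4)).** Let `h₁, h₂` be strictly increasing
`C²` diffeomorphisms of `ℝ` with derivative at least `λ > 1`, where `h₁` has a fixed point
`p⁺ < 0`, `h₂` has a fixed point `q⁺ > 1`, and for every `t ∈ [0,1]` either `h₁(t) ∈ (0,1)`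
or `h₂(t) ∈ (0,1)`. With `t₀ = h₂⁻¹(0)` and `t₁ = h₁⁻¹(1)`, one has `0 < t₀ < t₁ < 1`,
`p⁺ < h₂⁻¹(p⁺) < h₁⁻¹(q⁺) < q⁺`, and every `t ∈ [0,1]` with both `h₁(t) ∈ (0,1)` and
`h₂(t) ∈ (0,1)` satisfies `t₀ < t < t₁`. -/
theorem superposition_region
    (lam : ℝ) (hlam : 1 < lam)
    (h₁ h₂ : ℝ → ℝ)
    (h₁C : ContDiff ℝ 2 h₁) (h₂C : ContDiff ℝ 2 h₂)
    (h₁mono : StrictMono h₁) (h₂mono : StrictMono h₂)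
    (h₁bij : Function.Bijective h₁) (h₂bij : Function.Bijective h₂)
    (h₁deriv : ∀ t, lam ≤ deriv h₁ t) (h₂deriv : ∀ t, lam ≤ deriv h₂ t)
    (p q : ℝ) (hp : p < 0) (hq : 1 < q)
    (hfp : h₁ p = p) (hfq : h₂ q = q)
    (hsup : ∀ t ∈ Set.Icc (0 : ℝ) 1, h₁ t ∈ Set.Ioo (0 : ℝ) 1 ∨ h₂ t ∈ Set.Ioo (0 : ℝ) 1)
    (t₀ t₁ : ℝ) (ht₀ : h₂ t₀ = 0) (ht₁ : h₁ t₁ = 1) :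
    0 < t₀ ∧ t₀ < t₁ ∧ t₁ < 1 ∧
    p < Function.invFun h₂ p ∧
    Function.invFun h₂ p < Function.invFun h₁ q ∧
    Function.invFun h₁ q < q ∧
    ∀ t ∈ Set.Icc (0 : ℝ) 1, h₁ t ∈ Set.Ioo (0 : ℝ) 1 → h₂ t ∈ Set.Ioo (0 : ℝ) 1 →
      t₀ < t ∧ t < t₁ := by
  have h₁d : Differentiable ℝ h₁ := h₁C.differentiable (by norm_num)
  have h₂d : Differentiable ℝ h₂ := h₂C.differentiable (by norm_num)
  -- for t > p, h₁ t > t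
  have h₁gt : ∀ t, p < t → t < h₁ t := by
    intro t ht
    have := expand_lem lam h₁ h₁d h₁deriv ht.le
    rw [hfp] at this
    nlinarith
  -- for t < q, h₂ t < t
  have h₂lt : ∀ t, t < q → h₂ t < t := by
    intro t ht
    have := expand_lem lam h₂ h₂d h₂deriv ht.le
    rw [hfq] at this
    nlinarith
  -- 0 < t₀
  have ht₀q : t₀ < q := by
    by_contra hc
    push_neg at hc
    have := h₂mono.le_iff_le.mpr hc
    rw [ht₀, hfq] at this; linarith
  have h0t₀ : 0 < t₀ := by
    have := h₂lt t₀ ht₀q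
    rw [ht₀] at this; exact this
  -- t₁ < 1
  have hpt₁ : p < t₁ := by
    by_contra hc
    push_neg at hc
    have := h₁mono.le_iff_le.mpr hc
    rw [ht₁, hfp] at this; linarith
  have ht₁1 : t₁ < 1 := by
    have := h₁gt t₁ hpt₁
    rw [ht₁] at this; exact this
  -- t₀ < 1
  have ht₀1 : t₀ < 1 := by
    by_contra hc
    push_neg at hc
    have h1 : h₂ 1 ≤ 0 := by
      rw [← ht₀]; exact h₂mono.le_iff_le.mpr hc
    rcases hsup 1 (by constructor <;> norm_num) with hs | hs
    · have : 1 < t₁ := h₁mono.lt_iff_lt.mp (show h₁ 1 < h₁ t₁ by rw [ht₁]; exact hs.2)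
      linarith
    · linarith [hs.1]
  -- t₀ < t₁
  have ht₀t₁ : t₀ < t₁ := by
    rcases hsup t₀ ⟨h0t₀.le, ht₀1.le⟩ with hs | hs
    · have : h₁ t₀ < h₁ t₁ := by rw [ht₁]; exact hs.2
      exact h₁mono.lt_iff_lt.mp this
    · rw [ht₀] at hs; linarith [hs.1]
  -- invFun facts
  set a := Function.invFun h₂ p with ha
  set b := Function.invFun h₁ q with hb
  have hha : h₂ a = p := Function.rightInverse_invFun h₂bij.2 p
  have hhb : h₁ b = q := Function.rightInverse_invFun h₁bij.2 q
  have haq : a < q := by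
    by_contra hc; push_neg at hc
    have := h₂mono.le_iff_le.mpr hc
    rw [hha, hfq] at this; linarith
  have hpa : p < a := by have := h₂lt a haq; rw [hha] at this; linarith
  have hbp : p < b := by
    by_contra hc; push_neg at hc
    have := h₁mono.le_iff_le.mpr hc
    rw [hhb, hfp] at this; linarith
  have hbq : b < q := by have := h₁gt b hbp; rw [hhb] at this; linarith
  have hat₀ : a < t₀ := by
    have : h₂ a < h₂ t₀ := by rw [hha, ht₀]; linarith
    exact h₂mono.lt_iff_lt.mp this
  have ht₁b : t₁ < b := by
    have : h₁ t₁ < h₁ b := by rw [hhb, ht₁]; linarith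
    exact h₁mono.lt_iff_lt.mp this
  refine ⟨h0t₀, ht₀t₁, ht₁1, hpa, by linarith, hbq, ?_⟩
  intro t _ h1t h2t
  constructor
  · have : h₂ t₀ < h₂ t := by rw [ht₀]; exact h2t.1
    exact h₂mono.lt_iff_lt.mp this
  · have : h₁ t < h₁ t₁ := by rw [ht₁]; exact h1t.2
    exact h₁mono.lt_iff_lt.mp this
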